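/- arXiv:1109.1592 — 2 statements merged into one kernel-verified Lean document; each statement's English description precedes it below -/
import Mathlib

section
/- For each m ≥ 1, let G_m be the complement of the disjoint union of two copies of the complete bipartite graph K_{m,m} (a graph on 4m vertices). Then I(H_paw; G_m)/binom(4m,4) tends to 3/8 as m → ∞. -/
open MeasureTheory Finset Filter Topology
open scoped Classical

/-- The paw graph: triangle on `0,1,2` plus pendant edge `{2,3}`. -/
def paw : SimpleGraph (Fin 4) where
  Adj u v := (u = 0 ∧ v = 1) ∨ (u = 1 ∧ v = 0) ∨ (u = 0 ∧ v = 2) ∨ (u = 2 ∧ v = 0) ∨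
             (u = 1 ∧ v = 2) ∨ (u = 2 ∧ v = 1) ∨ (u = 2 ∧ v = 3) ∨ (u = 3 ∧ v = 2)
  symm := by constructor; decide
  loopless := by constructor; decide

/-- `I(H;G)`: the number of `|V(H)|`-element subsets `S` of `V(G)` such that the
subgraph of `G` induced on `S` is isomorphic to `H`. -/
noncomputable def numInduced {α β : Type*} [Fintype α] [Fintype β] [DecidableEq β]
    (H : SimpleGraph α) (G : SimpleGraph β) : ℕ :=
  (Finset.univ.filter fun S : Finset β =>
    S.card = Fintype.card α ∧ Nonempty (H ≃g G.induce (S : Set β))).card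

namespace PawAux

variable {m : ℕ}

abbrev V (m : ℕ) := (Fin m ⊕ Fin m) ⊕ (Fin m ⊕ Fin m)
variable {m : ℕ}
def vv : Bool → Bool → Fin m → V m
  | false, false, i => .inl (.inl i)
  | false, true,  i => .inl (.inr i)
  | true,  false, i => .inr (.inl i)
  | true,  true,  i => .inr (.inr i)
def cmp : V m → Bool := Sum.elim (fun _ => false) (fun _ => true)
def sde : V m → Bool := Sum.elim Sum.isRight Sum.isRight
def idx : V m → Fin m := Sum.elim (Sum.elim id id) (Sum.elim id id)
@[simp] lemma vv_eta (u : V m) : vv (cmp u) (sde u) (idx u) = u := by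
  rcases u with (i|i)|(i|i) <;> rfl
@[simp] lemma vv_inj {c c' s s' : Bool} {i i' : Fin m} :
    vv c s i = vv (m := m) c' s' i' ↔ c = c' ∧ s = s' ∧ i = i' := by
  cases c <;> cases c' <;> cases s <;> cases s' <;> simp [vv]
@[simp] lemma cmp_vv (c s : Bool) (i : Fin m) : cmp (vv c s i) = c := by
  cases c <;> cases s <;> rfl
@[simp] lemma sde_vv (c s : Bool) (i : Fin m) : sde (vv c s i) = s := by
  cases c <;> cases s <;> rfl
@[simp] lemma idx_vv (c s : Bool) (i : Fin m) : idx (vv c s i) = i := by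
  cases c <;> cases s <;> rfl
abbrev Gm (m : ℕ) : SimpleGraph (V m) :=
  (SimpleGraph.sum (completeBipartiteGraph (Fin m) (Fin m))
    (completeBipartiteGraph (Fin m) (Fin m)))ᶜ
lemma adj_iff {u v : V m} :
    (Gm m).Adj u v ↔ u ≠ v ∧ (cmp u ≠ cmp v ∨ sde u = sde v) := by
  rcases u with (i|i)|(i|i) <;> rcases v with (j|j)|(j|j) <;>
    simp [SimpleGraph.compl_adj, cmp, sde]

/-- The standard paw-inducing vertex set. -/
def SS (c s : Bool) (i j k : Fin m) (h : Bool) (l : Fin m) : Finset (V m) :=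
  {vv c s i, vv c s j, vv c (!s) k, vv (!c) h l}

lemma card_SS {c s : Bool} {i j k : Fin m} {h : Bool} {l : Fin m} (hij : i ≠ j) :
    (SS c s i j k h l).card = 4 := by
  rw [SS, card_insert_of_notMem (by simp [hij]), card_insert_of_notMem (by simp),
    card_insert_of_notMem (by simp), card_singleton]

lemma iso_SS {c s : Bool} {i j k : Fin m} {h : Bool} {l : Fin m} (hij : i ≠ j) :
    Nonempty (paw ≃g (Gm m).induce (SS c s i j k h l : Set (V m))) := by
  have hmem : ∀ x : Fin 4,
      (![vv c s i, vv c s j, vv (!c) h l, vv c (!s) k] x) ∈ (SS c s i j k h l : Set (V m)) := by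
    intro x
    fin_cases x <;> simp [SS]
  let g : Fin 4 → (SS c s i j k h l : Set (V m)) := fun x => ⟨_, hmem x⟩
  have hginj : Function.Injective g := by
    intro x y hxy
    have hxy' := congrArg Subtype.val hxy
    fin_cases x <;> fin_cases y <;> simp_all [g, hij]
  have hcard : Fintype.card (SS c s i j k h l : Set (V m)) = 4 := by
    simp only [Finset.coe_sort_coe, Fintype.card_coe]
    exact card_SS hij
  have hbij : Function.Bijective g := by
    rw [Fintype.bijective_iff_injective_and_card]
    exact ⟨hginj, by rw [hcard, Fintype.card_fin]⟩
  refine ⟨⟨Equiv.ofBijective g hbij, ?_⟩⟩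
  intro x y
  show (Gm m).Adj ((g x) : V m) ((g y) : V m) ↔ _
  rw [adj_iff]
  fin_cases x <;> fin_cases y <;>
    simp [g, paw, hij, Ne.symm hij, Fin.ext_iff, -Fin.val_eq_zero_iff] <;> decide

lemma bool_eq_not {x y : Bool} (h : x ≠ y) : x = !y := by
  cases x <;> cases y <;> simp_all

lemma struct_of_iso {S : Finset (V m)} (hcard : S.card = 4)
    (hiso : Nonempty (paw ≃g (Gm m).induce (S : Set (V m)))) :
    ∃ c s i j k h l, i ≠ j ∧ S = SS c s i j k h l := by
  obtain ⟨f⟩ := hiso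
  have hAdj : ∀ u v : Fin 4, paw.Adj u v ↔ (Gm m).Adj (f u : V m) (f v : V m) :=
    fun u v => f.map_adj_iff.symm
  have hne : ∀ u v : Fin 4, u ≠ v → (f u : V m) ≠ (f v : V m) :=
    fun u v h e => h (f.toEquiv.injective (Subtype.ext e))
  set a : V m := (f 0 : V m) with ha
  set b : V m := (f 1 : V m) with hb
  set p : V m := (f 2 : V m) with hp
  set d : V m := (f 3 : V m) with hd
  have nonadj : ∀ u v : Fin 4, ¬ paw.Adj u v → u ≠ v →
      cmp (f u : V m) = cmp (f v : V m) ∧ sde (f u : V m) ≠ sde (f v : V m) := by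
    intro u v hp huv
    have h1 : ¬ (Gm m).Adj (f u : V m) (f v : V m) := fun h => hp ((hAdj u v).2 h)
    rw [adj_iff] at h1
    push_neg at h1
    exact h1 (hne u v huv)
  have adjc : ∀ u v : Fin 4, paw.Adj u v →
      cmp (f u : V m) ≠ cmp (f v : V m) ∨ sde (f u : V m) = sde (f v : V m) :=
    fun u v hp => ((adj_iff).1 ((hAdj u v).1 hp)).2
  have had := nonadj 0 3 (by simp only [paw]; decide) (by decide)
  have hbd := nonadj 1 3 (by simp only [paw]; decide) (by decide)
  have hpa := adjc 2 0 (by simp only [paw]; decide)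
  have hpd := adjc 2 3 (by simp only [paw]; decide)
  -- component/side structure
  have hcd : cmp d = cmp a := had.1.symm
  have hsd : sde d = !(sde a) := bool_eq_not (Ne.symm had.2)
  have hcb : cmp b = cmp a := by rw [hbd.1, hcd]
  have hsb : sde b = sde a := by
    have h2 := bool_eq_not hbd.2; rw [hsd] at h2; simpa using h2
  have hcp : cmp p = !(cmp a) := by
    rcases hpa with h | h
    · exact bool_eq_not h
    · rcases hpd with h' | h'
      · rw [hcd] at h'; exact bool_eq_not h'
      · rw [hsd] at h'; rw [h] at h'; rw [← ha] at h'; exact absurd h' (by simp)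
  have hiab : idx a ≠ idx b := by
    intro h
    apply hne 0 1 (by decide)
    show a = b
    rw [← vv_eta a, ← vv_eta b, hcb, hsb, h]
  refine ⟨cmp a, sde a, idx a, idx b, idx d, sde p, idx p, hiab, ?_⟩
  have hset : SS (cmp a) (sde a) (idx a) (idx b) (idx d) (sde p) (idx p) = {a, b, d, p} := by
    rw [SS]
    congr 1
    · exact vv_eta a
    congr 1
    · rw [← hcb, ← hsb]; exact vv_eta b
    congr 1
    · rw [← hcd, ← hsd]; exact vv_eta d
    congr 1
    · rw [← hcp]; exact vv_eta p
  rw [hset]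
  have hsub : ({a, b, d, p} : Finset (V m)) ⊆ S := by
    intro x hx
    simp only [mem_insert, mem_singleton] at hx
    rcases hx with rfl | rfl | rfl | rfl
    · exact (f 0).2
    · exact (f 1).2
    · exact (f 3).2
    · exact (f 2).2
  have hc4 : ({a, b, d, p} : Finset (V m)).card = 4 := by
    rw [card_insert_of_notMem, card_insert_of_notMem, card_insert_of_notMem, card_singleton]
    · simp only [mem_singleton]; exact hne 3 2 (by decide)
    · simp only [mem_insert, mem_singleton]
      push_neg
      exact ⟨hne 1 3 (by decide), hne 1 2 (by decide)⟩
    · simp only [mem_insert, mem_singleton]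
      push_neg
      exact ⟨hne 0 1 (by decide), hne 0 3 (by decide), hne 0 2 (by decide)⟩
  exact (Finset.eq_of_subset_of_card_le hsub (by rw [hcard, hc4])).symm

lemma SS_comm (c s : Bool) (i j k : Fin m) (h : Bool) (l : Fin m) :
    SS c s i j k h l = SS c s j i k h l := by
  rw [SS, SS, Finset.insert_comm]

lemma SS_inj {c c' s s' : Bool} {i j k i' j' k' : Fin m} {h h' : Bool} {l l' : Fin m}
    (hij : i < j) (hij' : i' < j')
    (hS : SS c s i j k h l = SS c' s' i' j' k' h' l') :
    c = c' ∧ s = s' ∧ i = i' ∧ j = j' ∧ k = k' ∧ h = h' ∧ l = l' := by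
  have hc : c = c' := by
    by_contra hc
    have hc2 : c = !c' := bool_eq_not hc
    subst hc2
    have m1 : vv (!c') s i ∈ SS c' s' i' j' k' h' l' := by rw [← hS]; simp [SS]
    have m2 : vv (!c') s j ∈ SS c' s' i' j' k' h' l' := by rw [← hS]; simp [SS]
    simp [SS, vv_inj] at m1 m2
    exact absurd (m1.2.trans m2.2.symm) hij.ne
  subst hc
  have m4 : vv (!c) h l ∈ SS c s' i' j' k' h' l' := by rw [← hS]; simp [SS]
  simp [SS, vv_inj] at m4
  have hs : s = s' := by
    by_contra hs
    have hs2 : s = !s' := bool_eq_not hs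
    subst hs2
    have m1 : vv c (!s') i ∈ SS c s' i' j' k' h' l' := by rw [← hS]; simp [SS]
    have m2 : vv c (!s') j ∈ SS c s' i' j' k' h' l' := by rw [← hS]; simp [SS]
    simp [SS, vv_inj] at m1 m2
    exact absurd (m1.trans m2.symm) hij.ne
  subst hs
  have m3 : vv c (!s) k ∈ SS c s i' j' k' h' l' := by rw [← hS]; simp [SS]
  have m1 : vv c s i ∈ SS c s i' j' k' h' l' := by rw [← hS]; simp [SS]
  have m2 : vv c s j ∈ SS c s i' j' k' h' l' := by rw [← hS]; simp [SS]
  simp [SS, vv_inj] at m1 m2 m3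
  have hijv : i = i' ∧ j = j' := by
    rcases m1 with h1 | h1 <;> rcases m2 with h2 | h2 <;>
      simp only [Fin.ext_iff, Fin.lt_def] at h1 h2 hij hij' ⊢ <;> omega
  exact ⟨rfl, rfl, hijv.1, hijv.2, m3, m4.1, m4.2⟩

def P (m : ℕ) : Finset (Fin m × Fin m) := univ.filter fun p => p.1 < p.2

lemma two_mul_card_P : 2 * (P m).card = m * m - m := by
  have hQ : (P m).card = (univ.filter fun p : Fin m × Fin m => p.2 < p.1).card := by
    apply Finset.card_bij (fun p _ => p.swap)
    · intro p hp; simp [P, mem_filter] at hp ⊢; exact hp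
    · intro p _ q _ h
      exact Prod.ext (congrArg Prod.snd h) (congrArg Prod.fst h)
    · intro p hp
      refine ⟨p.swap, ?_, ?_⟩
      · simp [P, mem_filter] at hp ⊢; exact hp
      · simp
  have hunion : (P m) ∪ (univ.filter fun p : Fin m × Fin m => p.2 < p.1)
      = (univ : Finset (Fin m)).offDiag := by
    ext p
    simp only [P, mem_union, mem_filter, mem_univ, true_and, Finset.mem_offDiag]
    exact lt_or_lt_iff_ne
  have hdisj : Disjoint (P m) (univ.filter fun p : Fin m × Fin m => p.2 < p.1) := by
    rw [Finset.disjoint_left]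
    intro p hp hq
    simp only [P, mem_filter] at hp hq
    exact lt_asymm hp.2 hq.2
  calc 2 * (P m).card = (P m).card + (univ.filter fun p : Fin m × Fin m => p.2 < p.1).card := by
        rw [← hQ]; ring
    _ = ((P m) ∪ (univ.filter fun p : Fin m × Fin m => p.2 < p.1)).card :=
        (Finset.card_union_of_disjoint hdisj).symm
    _ = m * m - m := by
        rw [hunion, Finset.offDiag_card, card_univ, Fintype.card_fin]

def D (m : ℕ) : Finset (Bool × Bool × (Fin m × Fin m) × Fin m × Bool × Fin m) :=
  univ ×ˢ univ ×ˢ P m ×ˢ univ ×ˢ univ ×ˢ univ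

lemma count : numInduced paw (Gm m) = 2 * (2 * ((P m).card * (m * (2 * m)))) := by
  unfold numInduced
  have key : (D m).card =
      (univ.filter fun S : Finset (V m) =>
        S.card = Fintype.card (Fin 4) ∧
          Nonempty (paw ≃g (Gm m).induce (S : Set (V m)))).card := by
    apply Finset.card_bij
      (fun t _ => SS t.1 t.2.1 t.2.2.1.1 t.2.2.1.2 t.2.2.2.1 t.2.2.2.2.1 t.2.2.2.2.2)
    · intro t ht
      simp only [D, Finset.mem_product, P, mem_filter, mem_univ, true_and] at ht
      simp only [mem_filter, mem_univ, true_and, Fintype.card_fin]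
      exact ⟨card_SS ht.1.ne, iso_SS ht.1.ne⟩
    · intro t ht t' ht' hEq
      simp only [D, Finset.mem_product, P, mem_filter, mem_univ, true_and] at ht ht'
      obtain ⟨c, s, ⟨i, j⟩, k, hh, l⟩ := t
      obtain ⟨c', s', ⟨i', j'⟩, k', hh', l'⟩ := t'
      obtain ⟨e1, e2, e3, e4, e5, e6, e7⟩ := SS_inj ht.1 ht'.1 hEq
      subst e1; subst e2; subst e3; subst e4; subst e5; subst e6; subst e7
      rfl
    · intro S hS
      simp only [mem_filter, mem_univ, true_and, Fintype.card_fin] at hS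
      obtain ⟨c, s, i, j, k, hh, l, hij, rfl⟩ := struct_of_iso hS.1 hS.2
      rcases hij.lt_or_gt with hlt | hlt
      · exact ⟨(c, s, (i, j), k, hh, l),
          by simp only [D, Finset.mem_product, P, mem_filter, mem_univ, true_and]; exact ⟨hlt, trivial⟩, rfl⟩
      · exact ⟨(c, s, (j, i), k, hh, l),
          by simp only [D, Finset.mem_product, P, mem_filter, mem_univ, true_and]; exact ⟨hlt, trivial⟩,
          (SS_comm c s i j k hh l).symm⟩
  rw [← key]
  simp [D, Finset.card_product, card_univ, mul_comm, mul_assoc, mul_left_comm]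

lemma choose_eq : 24 * (4*m).choose 4 = (4*m - 3)*((4*m - 2)*((4*m - 1)*(4*m))) := by
  have h := Nat.descFactorial_eq_factorial_mul_choose (4*m) 4
  have h2 : (4*m).descFactorial 4 = (4*m - 3)*((4*m - 2)*((4*m - 1)*(4*m))) := by
    simp [Nat.descFactorial_succ, Nat.descFactorial_zero]
  rw [← h2, h]
  norm_num [Nat.factorial]

lemma ratio_eq {m : ℕ} (hm : 1 ≤ m) :
    (numInduced paw (Gm m) : ℝ) / ((4*m).choose 4) =
    (24*(1 - 1/(m:ℝ))) / ((4 - 1/(m:ℝ))*((4 - 2*(1/(m:ℝ)))*(4 - 3*(1/(m:ℝ))))) := by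
  have hM0 : (0:ℝ) < m := by exact_mod_cast hm
  have hM1 : (1:ℝ) ≤ m := by exact_mod_cast hm
  have c1 : (numInduced paw (Gm m) : ℝ) = 8 * ((P m).card : ℝ) * m * m := by
    rw [count]; push_cast; ring
  have c2 : ((P m).card : ℝ) = ((m:ℝ)*m - m)/2 := by
    have h := two_mul_card_P (m := m)
    have hle : m ≤ m * m := Nat.le_mul_of_pos_left m (by omega)
    have := congrArg (Nat.cast : ℕ → ℝ) h
    rw [Nat.cast_sub hle] at this
    push_cast at this
    linarith
  have c3 : ((4*m).choose 4 : ℝ) = ((4*(m:ℝ) - 3)*((4*m - 2)*((4*m - 1)*(4*m))))/24 := by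
    have e1 : ((4*m - 1 : ℕ):ℝ) = 4*(m:ℝ) - 1 := by
      rw [Nat.cast_sub (by omega)]; push_cast; ring
    have e2 : ((4*m - 2 : ℕ):ℝ) = 4*(m:ℝ) - 2 := by
      rw [Nat.cast_sub (by omega)]; push_cast; ring
    have e3 : ((4*m - 3 : ℕ):ℝ) = 4*(m:ℝ) - 3 := by
      rw [Nat.cast_sub (by omega)]; push_cast; ring
    have hcast := congrArg (Nat.cast : ℕ → ℝ) (choose_eq (m := m))
    push_cast [e1, e2, e3] at hcast
    linarith
  rw [c1, c2, c3]
  have hinv : 1/(m:ℝ) ≤ 1 := by rw [div_le_one hM0]; exact hM1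
  have hinv0 : 0 < 1/(m:ℝ) := by positivity
  have h1 : 4*(m:ℝ) - 1 ≠ 0 := by nlinarith
  have h2 : 4*(m:ℝ) - 2 ≠ 0 := by nlinarith
  have h3 : 4*(m:ℝ) - 3 ≠ 0 := by nlinarith
  have h4 : (m:ℝ) ≠ 0 := ne_of_gt hM0
  have h5 : 4 - 1/(m:ℝ) ≠ 0 := by nlinarith
  have h6 : 4 - 2*(1/(m:ℝ)) ≠ 0 := by nlinarith
  have h7 : 4 - 3*(1/(m:ℝ)) ≠ 0 := by nlinarith
  field_simp
  ring

end PawAux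

open PawAux in
/-- For `G_m` the complement of the disjoint union of two copies of
`K_{m,m}` (a graph on `4m` vertices), `I(H_paw; G_m)/binom(4m,4) → 3/8` as `m → ∞`. -/
theorem paw_density_in_complement_two_Kmm :
    Tendsto
      (fun m : ℕ =>
        (numInduced paw
            ((SimpleGraph.sum (completeBipartiteGraph (Fin m) (Fin m))
                (completeBipartiteGraph (Fin m) (Fin m)))ᶜ) : ℝ) /
          ((4 * m).choose 4))
      atTop (𝓝 (3 / 8)) := by
  have t := tendsto_one_div_atTop_nhds_zero_nat (𝕜 := ℝ)
  have num : Tendsto (fun m : ℕ => 24*(1 - 1/(m:ℝ))) atTop (𝓝 (24*(1 - 0))) :=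
    (tendsto_const_nhds.sub t).const_mul 24
  have den : Tendsto
      (fun m : ℕ => (4 - 1/(m:ℝ))*((4 - 2*(1/(m:ℝ)))*(4 - 3*(1/(m:ℝ)))))
      atTop (𝓝 ((4 - 0)*((4 - 2*0)*(4 - 3*0)))) :=
    (tendsto_const_nhds.sub t).mul
      (((tendsto_const_nhds.sub (t.const_mul 2))).mul
        ((tendsto_const_nhds.sub (t.const_mul 3))))
  have main := num.div den (by norm_num)
  have heq : (24*((1:ℝ) - 0)) / ((4 - 0)*((4 - 2*0)*(4 - 3*0))) = 3/8 := by norm_num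
  rw [heq] at main
  refine main.congr' ?_
  filter_upwards [eventually_ge_atTop 1] with m hm
  exact (ratio_eq hm).symm
end

section
/- For every two finite simple graphs H and G with |V(G)| = n ≥ 1 and |V(H)| = k, one has |t(H;G) − t_inj(H;G)| ≤ (1/n)·binom(k,2). -/
open MeasureTheory Finset Filter Topology
open scoped Classical

/-- Auxiliary: maps identifying a fixed pair of distinct vertices number at most `n ^ (k-1)`. -/
lemma aux_card_pair_eq_le {k n : ℕ} (u v : Fin k) (huv : u ≠ v) :
    (Finset.univ.filter fun f : Fin k → Fin n => f u = f v).card ≤ n ^ (k - 1) := by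
  have h := Finset.card_le_card_of_injOn
    (s := Finset.univ.filter fun f : Fin k → Fin n => f u = f v)
    (f := fun (f : Fin k → Fin n) => (fun x : {x : Fin k // x ≠ v} => f x))
    (t := (Finset.univ : Finset ({x : Fin k // x ≠ v} → Fin n)))
    (fun a _ => Finset.mem_univ _) ?_
  · calc (Finset.univ.filter fun f : Fin k → Fin n => f u = f v).card
        ≤ (Finset.univ : Finset ({x : Fin k // x ≠ v} → Fin n)).card := h
      _ = n ^ (k - 1) := by
          rw [Finset.card_univ, Fintype.card_fun, Fintype.card_fin,
            Fintype.card_subtype_compl, Fintype.card_subtype_eq, Fintype.card_fin]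
  · intro f hf g hg hfg
    simp only [Finset.mem_coe, Finset.mem_filter] at hf hg
    funext x
    by_cases hx : x = v
    · subst hx
      have h1 := congrFun hfg ⟨u, huv⟩
      simp only at h1
      rw [← hf.2, ← hg.2, h1]
    · exact congrFun hfg ⟨x, hx⟩

/-- Auxiliary: union bound for the number of non-injective maps. -/
lemma aux_card_noninj_le {k n : ℕ} :
    (Finset.univ.filter fun f : Fin k → Fin n => ¬ Function.Injective f).card
      ≤ k.choose 2 * n ^ (k - 1) := by
  have hsub : (Finset.univ.filter fun f : Fin k → Fin n => ¬ Function.Injective f)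
      ⊆ Finset.univ.biUnion fun v : Fin k =>
          (Finset.Iio v).biUnion fun u =>
            Finset.univ.filter fun f : Fin k → Fin n => f u = f v := by
    intro f hf
    simp only [Finset.mem_filter, Function.Injective, not_forall] at hf
    obtain ⟨a, b, hab, hne⟩ := hf.2
    rcases lt_or_gt_of_ne hne with h | h
    · exact Finset.mem_biUnion.2 ⟨b, Finset.mem_univ _,
        Finset.mem_biUnion.2 ⟨a, Finset.mem_Iio.2 h,
          Finset.mem_filter.2 ⟨Finset.mem_univ _, hab⟩⟩⟩
    · exact Finset.mem_biUnion.2 ⟨a, Finset.mem_univ _,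
        Finset.mem_biUnion.2 ⟨b, Finset.mem_Iio.2 h,
          Finset.mem_filter.2 ⟨Finset.mem_univ _, hab.symm⟩⟩⟩
  calc (Finset.univ.filter fun f : Fin k → Fin n => ¬ Function.Injective f).card
      ≤ _ := Finset.card_le_card hsub
    _ ≤ ∑ v : Fin k, ((Finset.Iio v).biUnion fun u =>
          Finset.univ.filter fun f : Fin k → Fin n => f u = f v).card :=
        Finset.card_biUnion_le
    _ ≤ ∑ v : Fin k, ∑ u ∈ Finset.Iio v,
          (Finset.univ.filter fun f : Fin k → Fin n => f u = f v).card :=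
        Finset.sum_le_sum fun v _ => Finset.card_biUnion_le
    _ ≤ ∑ v : Fin k, ∑ u ∈ Finset.Iio v, n ^ (k - 1) :=
        Finset.sum_le_sum fun v _ => Finset.sum_le_sum fun u hu =>
          aux_card_pair_eq_le u v (ne_of_lt (Finset.mem_Iio.1 hu))
    _ = (∑ v : Fin k, (v : ℕ)) * n ^ (k - 1) := by
        simp [Finset.sum_const, Fin.card_Iio, Finset.sum_mul]
    _ = k.choose 2 * n ^ (k - 1) := by
        congr 1
        rw [Fin.sum_univ_eq_sum_range (fun i => i), Finset.sum_range_id, Nat.choose_two_right]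

/-- Auxiliary: the purely arithmetic part of the estimate. -/
lemma aux_helper_ineq (A B I M N C n : ℕ) (hIM : I + M = N) (hBI : B ≤ I) (hBA : B ≤ A)
    (hAB : A ≤ B + M) (hI1 : 1 ≤ I) (hn : 1 ≤ n) (hMn : M * n ≤ C * N) :
    |(A:ℝ)/N - (B:ℝ)/I| ≤ (1/n : ℝ) * C := by
  have hn0 : (0:ℝ) < n := by exact_mod_cast hn
  have hI0 : (0:ℝ) < I := by exact_mod_cast hI1
  have hN0 : (0:ℝ) < N := by
    have : 1 ≤ N := hI1.trans (le_of_add_le_left hIM.le)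
    exact_mod_cast this
  have hIN : (I:ℝ) ≤ N := by exact_mod_cast le_of_add_le_left hIM.le
  have hIMr : (I:ℝ) + M = N := by exact_mod_cast hIM
  have hABr : (A:ℝ) ≤ B + M := by exact_mod_cast hAB
  have hBAr : (B:ℝ) ≤ A := by exact_mod_cast hBA
  have hBIr : (B:ℝ) ≤ I := by exact_mod_cast hBI
  have hB0 : (0:ℝ) ≤ B := Nat.cast_nonneg _
  have hM0 : (0:ℝ) ≤ M := Nat.cast_nonneg _
  have hMnr : (M:ℝ) * n ≤ C * N := by exact_mod_cast hMn
  have key : |(A:ℝ)/N - (B:ℝ)/I| ≤ (M:ℝ)/N := by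
    rw [abs_le]
    constructor
    · have h4 : (B:ℝ)*N - I*A ≤ I*M := by
        have h1 : (I:ℝ)*B ≤ I*A := mul_le_mul_of_nonneg_left hBAr hI0.le
        have h2 : (B:ℝ)*M ≤ I*M := mul_le_mul_of_nonneg_right hBIr hM0
        have h3 : (B:ℝ)*N = B*I + B*M := by rw [← hIMr]; ring
        nlinarith
      rw [neg_le, neg_sub, div_sub_div _ _ hI0.ne' hN0.ne', div_le_div_iff₀ (by positivity) hN0]
      calc ((B:ℝ)*N - I*A)*N ≤ (I*M)*N := mul_le_mul_of_nonneg_right h4 hN0.le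
        _ = M*(I*N) := by ring
    · have h5 : (A:ℝ)*I - N*B ≤ M*I := by
        have h1 : (A:ℝ)*I ≤ ((B:ℝ)+M)*I := mul_le_mul_of_nonneg_right hABr hI0.le
        have h2 : (B:ℝ)*I ≤ B*N := mul_le_mul_of_nonneg_left hIN hB0
        nlinarith
      rw [div_sub_div _ _ hN0.ne' hI0.ne', div_le_div_iff₀ (by positivity) hN0]
      calc ((A:ℝ)*I - N*B)*N ≤ (M*I)*N := mul_le_mul_of_nonneg_right h5 hN0.le
        _ = M*(N*I) := by ring
  have hMN : (M:ℝ)/N ≤ 1/n * C := by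
    rw [one_div, inv_mul_eq_div, div_le_div_iff₀ hN0 hn0]
    exact hMnr
  exact key.trans hMN

/-- `t(H;G)`: the probability that a uniformly random map `V(H) → V(G)` is a
graph homomorphism. -/
noncomputable def tHom {k n : ℕ} (H : SimpleGraph (Fin k)) (G : SimpleGraph (Fin n)) : ℝ :=
  ((Finset.univ.filter fun f : Fin k → Fin n =>
      ∀ u v, H.Adj u v → G.Adj (f u) (f v)).card : ℝ) / (Fintype.card (Fin k → Fin n))

/-- `t_inj(H;G)`: the probability that a uniformly random injective map `V(H) → V(G)`
is a graph homomorphism. -/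
noncomputable def tInj {k n : ℕ} (H : SimpleGraph (Fin k)) (G : SimpleGraph (Fin n)) : ℝ :=
  ((Finset.univ.filter fun f : Fin k → Fin n =>
      Function.Injective f ∧ ∀ u v, H.Adj u v → G.Adj (f u) (f v)).card : ℝ) /
    ((Finset.univ.filter fun f : Fin k → Fin n => Function.Injective f).card : ℝ)

/-- For graphs `H` on `k` vertices and `G` on `n ≥ 1` vertices
(with `k ≤ n`, so that `t_inj` is defined), `|t(H;G) - t_inj(H;G)| ≤ (1/n)·binom(k,2)`. -/
theorem abs_tHom_sub_tInj_le {k n : ℕ} (hn : 1 ≤ n) (hkn : k ≤ n)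
    (H : SimpleGraph (Fin k)) (G : SimpleGraph (Fin n)) :
    |tHom H G - tInj H G| ≤ (1 / n : ℝ) * (k.choose 2) := by
  have hIM : (Finset.univ.filter fun f : Fin k → Fin n => Function.Injective f).card
      + (Finset.univ.filter fun f : Fin k → Fin n => ¬ Function.Injective f).card
      = Fintype.card (Fin k → Fin n) := by
    rw [← Finset.card_univ]
    exact Finset.card_filter_add_card_filter_not _
  have hBI : (Finset.univ.filter fun f : Fin k → Fin n =>
        Function.Injective f ∧ ∀ u v, H.Adj u v → G.Adj (f u) (f v)).card
      ≤ (Finset.univ.filter fun f : Fin k → Fin n => Function.Injective f).card := by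
    apply Finset.card_le_card
    intro f hf
    simp only [Finset.mem_filter] at hf ⊢
    exact ⟨hf.1, hf.2.1⟩
  have hBA : (Finset.univ.filter fun f : Fin k → Fin n =>
        Function.Injective f ∧ ∀ u v, H.Adj u v → G.Adj (f u) (f v)).card
      ≤ (Finset.univ.filter fun f : Fin k → Fin n =>
        ∀ u v, H.Adj u v → G.Adj (f u) (f v)).card := by
    apply Finset.card_le_card
    intro f hf
    simp only [Finset.mem_filter] at hf ⊢
    exact ⟨hf.1, hf.2.2⟩
  have hAB : (Finset.univ.filter fun f : Fin k → Fin n =>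
        ∀ u v, H.Adj u v → G.Adj (f u) (f v)).card
      ≤ (Finset.univ.filter fun f : Fin k → Fin n =>
          Function.Injective f ∧ ∀ u v, H.Adj u v → G.Adj (f u) (f v)).card
        + (Finset.univ.filter fun f : Fin k → Fin n => ¬ Function.Injective f).card := by
    refine le_trans (Finset.card_le_card ?_) (Finset.card_union_le _ _)
    intro f hf
    simp only [Finset.mem_filter, Finset.mem_union] at hf ⊢
    by_cases hinj : Function.Injective f
    · exact Or.inl ⟨hf.1, hinj, hf.2⟩
    · exact Or.inr ⟨hf.1, hinj⟩
  have hI1 : 1 ≤ (Finset.univ.filter fun f : Fin k → Fin n => Function.Injective f).card := by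
    refine Finset.card_pos.2 ⟨Fin.castLE hkn, Finset.mem_filter.2 ⟨Finset.mem_univ _, ?_⟩⟩
    exact Fin.castLE_injective hkn
  have hMn : (Finset.univ.filter fun f : Fin k → Fin n => ¬ Function.Injective f).card * n
      ≤ k.choose 2 * Fintype.card (Fin k → Fin n) := by
    rcases Nat.eq_zero_or_pos k with hk | hk
    · subst hk
      have hM0 : (Finset.univ.filter fun f : Fin 0 → Fin n => ¬ Function.Injective f).card = 0 := by
        rw [Finset.card_eq_zero, Finset.filter_eq_empty_iff]
        intro f _
        simp only [not_not]
        intro a b _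
        exact Subsingleton.elim a b
      rw [hM0, Nat.zero_mul]
      exact Nat.zero_le _
    · calc (Finset.univ.filter fun f : Fin k → Fin n => ¬ Function.Injective f).card * n
          ≤ k.choose 2 * n ^ (k - 1) * n := Nat.mul_le_mul_right _ aux_card_noninj_le
        _ = k.choose 2 * Fintype.card (Fin k → Fin n) := by
            rw [Fintype.card_fun, Fintype.card_fin, Fintype.card_fin, mul_assoc, ← pow_succ,
              Nat.sub_add_cancel hk]
  exact aux_helper_ineq _ _ _ _ _ _ _ hIM hBI hBA hAB hI1 hn hMn
end
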